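/- arXiv:2401.07034 — 2 statements merged into one kernel-verified Lean document; each statement's English description precedes it below -/
import Mathlib

section
/- If ψ is a Hamiltonian diffeomorphism with γ(ψ) > R > R' > 0, and for all sufficiently large k one has b_{Rk}(ψ;L₀,L₁,k) ≥ e^{hk} for some h > 0, then along a suitable subsequence of integers k' one has b_{R'k'}(ψ;L₀,L₁,k') ≥ e^{h'k'} with h' = h·(γ(ψ) - R')/(γ(ψ) - R). Concretely: given Z = γ(ψ) and the stability property b_{ε-δ}(ψ';L₀,L₁,k) ≥ b_ε(ψ;L₀,L₁,k) whenever d_γ(ψ',ψ) < δ < ε (applied with ψ' = ψ^{k'}, ψ = ψ^k), the R'-strong barcode entropy satisfies H^{R'}(ψ;L₀,L₁) ≥ ((γ(ψ)-R')/(γ(ψ)-R))·H^R(ψ;L₀,L₁). -/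
open Filter

/-- The `R`-strong relative barcode entropy, defined abstractly from the
bar-counting function `b ε k = b_ε(ψ;L₀,L₁,k)`:
`H^R = lim_{R̂→R⁻} limsup_{k→∞} (1/k)·log b(R̂k, k)`, which (by monotonicity)
equals the infimum over `R̂ < R`. -/
noncomputable def Hstrong (b : ℝ → ℕ → ℕ) (R : ℝ) : EReal :=
  ⨅ Rh : Set.Iio R,
    Filter.limsup (fun k : ℕ => ((Real.log (b ((Rh : ℝ) * k) k) / k : ℝ) : EReal))
      Filter.atTop

private lemma log_nat_mono {a b : ℕ} (h : a ≤ b) : Real.log a ≤ Real.log b := by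
  rcases Nat.eq_zero_or_pos a with h0 | h0
  · simpa [h0] using Real.log_natCast_nonneg b
  · exact Real.log_le_log (by exact_mod_cast h0) (by exact_mod_cast h)

private lemma ereal_mul_mono {c : ℝ} (hc : 0 < c) {x y : EReal} (h : x ≤ y) :
    (c : EReal) * x ≤ (c : EReal) * y := by
  induction x using EReal.rec with
  | bot => simp [EReal.coe_mul_bot_of_pos hc]
  | coe a =>
    induction y using EReal.rec with
    | bot => exact absurd h (by simp)
    | coe b =>
      rw [← EReal.coe_mul, ← EReal.coe_mul, EReal.coe_le_coe_iff]
      exact mul_le_mul_of_nonneg_left (EReal.coe_le_coe_iff.mp h) hc.le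
    | top => simp [EReal.coe_mul_top_of_pos hc]
  | top =>
    rw [top_le_iff.mp h]

set_option maxHeartbeats 1000000 in
/-- Proposition (strict monotonicity of strong barcode entropy, part (iii)):
if `γ(ψ) = Z > R > R' > 0` and the bar counts satisfy the `γ`-stability
property `b ε k ≤ b (ε - |k - k'|·Z) k'` (coming from `d_γ(ψ^k, ψ^{k'}) ≤ |k-k'|·Z`),
then `H^{R'}(ψ;L₀,L₁) ≥ ((Z - R')/(Z - R)) · H^R(ψ;L₀,L₁)`. -/
theorem strong_barcode_entropy_strict_monotone
    (b : ℝ → ℕ → ℕ) (Z R R' : ℝ)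
    (hmono : ∀ k, Antitone fun ε => b ε k)
    (hstab : ∀ (ε : ℝ) (k k' : ℕ), |(k : ℝ) - (k' : ℝ)| * Z < ε →
      b ε k ≤ b (ε - |(k : ℝ) - (k' : ℝ)| * Z) k')
    (hR'0 : 0 < R') (hR'R : R' < R) (hRZ : R < Z) :
    (((Z - R') / (Z - R) : ℝ) : EReal) * Hstrong b R ≤ Hstrong b R' := by
  have hZR : (0:ℝ) < Z - R := by linarith
  have hZR' : (0:ℝ) < Z - R' := by linarith
  set c : ℝ := (Z - R') / (Z - R) with hc_def
  set q : ℝ := (Z - R) / (Z - R') with hq_def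
  have hc0 : 0 < c := div_pos hZR' hZR
  have hq0 : 0 < q := div_pos hZR hZR'
  have hq1 : q ≤ 1 := by
    rw [hq_def, div_le_one hZR']; linarith
  have hcq : c * q = 1 := by
    rw [hc_def, hq_def]; field_simp
  rw [Hstrong]
  refine le_iInf ?_
  rintro ⟨s, hs⟩
  rw [Set.mem_Iio] at hs
  show (c : EReal) * Hstrong b R ≤
    Filter.limsup (fun k : ℕ => ((Real.log (b (s * k) k) / k : ℝ) : EReal)) Filter.atTop
  -- replace s by r = max s (R'/2) ∈ (0, R')
  set r : ℝ := max s (R'/2) with hrdef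
  have hr0 : 0 < r := lt_of_lt_of_le (by linarith) (le_max_right _ _)
  have hrR' : r < R' := max_lt hs (by linarith)
  have hsle : s ≤ r := le_max_left _ _
  have stepA : Filter.limsup (fun k : ℕ => ((Real.log (b (r * k) k) / k : ℝ) : EReal)) atTop
      ≤ Filter.limsup (fun k : ℕ => ((Real.log (b (s * k) k) / k : ℝ) : EReal)) atTop := by
    refine Filter.limsup_le_limsup (Filter.Eventually.of_forall fun k => ?_)
    have hb : b (r * k) k ≤ b (s * k) k :=
      hmono k (mul_le_mul_of_nonneg_right hsle (Nat.cast_nonneg k))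
    have hlog : Real.log (b (r * k) k) * ((k:ℝ))⁻¹ ≤ Real.log (b (s * k) k) * ((k:ℝ))⁻¹ :=
      mul_le_mul_of_nonneg_right (log_nat_mono hb) (inv_nonneg.mpr (Nat.cast_nonneg k))
    show ((Real.log (b (r * k) k) / k : ℝ) : EReal) ≤ ((Real.log (b (s * k) k) / k : ℝ) : EReal)
    rw [div_eq_mul_inv, div_eq_mul_inv]
    exact EReal.coe_le_coe_iff.mpr hlog
  refine le_trans ?_ stepA
  -- main argument with r ∈ (0, R')
  have hZr : (0:ℝ) < Z - r := by linarith
  set t : ℝ := Z - (Z - R) * (Z - r) / (Z - R') with htdef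
  have hZt : Z - t = (Z - R) * (Z - r) / (Z - R') := by rw [htdef]; ring
  have hZtpos : 0 < Z - t := by rw [hZt]; positivity
  have htR : t < R := by
    have h1 : Z - R < Z - t := by
      rw [hZt, lt_div_iff₀ hZR']
      nlinarith [mul_pos hZR (sub_pos.mpr hrR')]
    linarith
  have hqr : q * (Z - r) = Z - t := by
    rw [hZt, hq_def]; ring
  -- key combinatorial inequality
  have bkey : ∀ k : ℕ, 1 ≤ k →
      b (t * k) k ≤ b (r * (⌈(k:ℝ) * q⌉₊ : ℕ)) ⌈(k:ℝ) * q⌉₊ := by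
    intro k hk
    set k' : ℕ := ⌈(k:ℝ) * q⌉₊ with hk'def
    have hk0 : (0:ℝ) < k := by exact_mod_cast hk
    have hkq : (0:ℝ) < (k:ℝ) * q := mul_pos hk0 hq0
    have hk'ge : (k:ℝ) * q ≤ (k':ℝ) := Nat.le_ceil _
    have hk'le : k' ≤ k := Nat.ceil_le.mpr (by nlinarith)
    have habs : |(k:ℝ) - (k':ℝ)| = (k:ℝ) - (k':ℝ) :=
      abs_of_nonneg (sub_nonneg.mpr (by exact_mod_cast hk'le))
    have h2 : (k:ℝ) * (Z - t) = (k:ℝ) * q * (Z - r) := by rw [← hqr]; ring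
    have h1 : (k:ℝ) * q * Z ≤ (k':ℝ) * Z :=
      mul_le_mul_of_nonneg_right hk'ge (by linarith)
    have h3 : (k:ℝ) * q * (Z - r) ≤ (k':ℝ) * (Z - r) :=
      mul_le_mul_of_nonneg_right hk'ge hZr.le
    have hpre : |(k:ℝ) - (k':ℝ)| * Z < t * k := by
      rw [habs]
      nlinarith [mul_pos hkq hr0]
    calc b (t * k) k ≤ b (t * k - |(k:ℝ) - (k':ℝ)| * Z) k' := hstab _ k k' hpre
      _ ≤ b (r * k') k' := by
          refine hmono k' ?_
          rw [habs]
          nlinarith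
  -- pass to limsups in EReal
  set F : ℕ → EReal := fun k => ((Real.log (b (t * k) k) / k : ℝ) : EReal) with hF
  set G : ℕ → EReal := fun k => ((Real.log (b (r * k) k) / k : ℝ) : EReal) with hG
  set L : EReal := Filter.limsup F atTop with hL
  have hHL : Hstrong b R ≤ L := by
    rw [Hstrong]
    exact iInf_le (fun Rh : Set.Iio R =>
      Filter.limsup (fun k : ℕ => ((Real.log (b ((Rh : ℝ) * k) k) / k : ℝ) : EReal)) atTop)
      ⟨t, htR⟩
  refine le_trans (ereal_mul_mono hc0 hHL) ?_
  -- show (c : EReal) * L ≤ limsup G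
  have claim : ∀ x : ℝ, (x : EReal) < (c : EReal) * L → (x : EReal) ≤ Filter.limsup G atTop := by
    intro x hx
    have hG0 : ∀ k, (0:EReal) ≤ G k := fun k =>
      EReal.coe_nonneg.mpr (div_nonneg (Real.log_natCast_nonneg _) (Nat.cast_nonneg k))
    have hlim0 : (0:EReal) ≤ Filter.limsup G atTop :=
      le_limsup_of_frequently_le (Filter.Frequently.of_forall hG0)
    rcases le_or_gt x 0 with hx0 | hx0
    · exact le_trans (by exact_mod_cast hx0 : (x:EReal) ≤ (0:ℝ)) hlim0
    · have hLgt : ((x / c : ℝ) : EReal) < L := by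
        by_contra hLc
        push_neg at hLc
        have hmul := ereal_mul_mono hc0 hLc
        rw [← EReal.coe_mul] at hmul
        have hxc : c * (x / c) = x := by field_simp
        rw [hxc] at hmul
        exact absurd (lt_of_lt_of_le hx hmul) (lt_irrefl _)
      obtain ⟨y, hy1, hy2⟩ := EReal.exists_between_coe_real hLgt
      have hy1' : x / c < y := EReal.coe_lt_coe_iff.mp hy1
      have hy0 : 0 < y := lt_trans (div_pos hx0 hc0) hy1'
      have hxq : x * q = x / c := by
        rw [eq_div_iff (ne_of_gt hc0)]
        linear_combination x * hcq
      have hyxq : 0 < y - x * q := by rw [hxq]; linarith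
      have hfreq : ∃ᶠ k in atTop, (y : EReal) < F k :=
        frequently_lt_of_lt_limsup (by isBoundedDefault) hy2
      have hfreq' : ∃ᶠ k' in atTop, (x : EReal) ≤ G k' := by
        rw [Filter.frequently_atTop] at hfreq ⊢
        intro N
        set T : ℕ := max (max ⌈(N:ℝ)/q⌉₊ ⌈x/(y - x*q)⌉₊) 1 with hT
        obtain ⟨k, hkT, hkF⟩ := hfreq T
        have hk1 : 1 ≤ k := le_trans (le_max_right _ _) hkT
        have hk0 : (0:ℝ) < k := by exact_mod_cast hk1
        have hkN : (N:ℝ) ≤ (k:ℝ) * q := by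
          have h1 : ((⌈(N:ℝ)/q⌉₊ : ℕ) : ℝ) ≤ (k:ℝ) := by
            exact_mod_cast le_trans (le_trans (le_max_left _ _) (le_max_left _ _)) hkT
          have h2 : (N:ℝ)/q ≤ (k:ℝ) := le_trans (Nat.le_ceil _) h1
          rw [div_le_iff₀ hq0] at h2
          linarith
        have hkX : x ≤ (k:ℝ) * (y - x * q) := by
          have h1 : ((⌈x/(y - x*q)⌉₊ : ℕ) : ℝ) ≤ (k:ℝ) := by
            exact_mod_cast le_trans (le_trans (le_max_right _ _) (le_max_left _ _)) hkT
          have h2 : x/(y - x*q) ≤ (k:ℝ) := le_trans (Nat.le_ceil _) h1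
          rw [div_le_iff₀ hyxq] at h2
          linarith
        set k' : ℕ := ⌈(k:ℝ) * q⌉₊ with hk'def
        have hk'ge : (k:ℝ) * q ≤ (k':ℝ) := Nat.le_ceil _
        have hk'le : (k':ℝ) < (k:ℝ) * q + 1 :=
          Nat.ceil_lt_add_one (by positivity)
        have hk'pos : (0:ℝ) < (k':ℝ) := lt_of_lt_of_le (mul_pos hk0 hq0) hk'ge
        refine ⟨k', ?_, ?_⟩
        · exact_mod_cast le_trans hkN hk'ge
        · -- x ≤ G k'
          have hkFr : y < Real.log (b (t * k) k) / k := EReal.coe_lt_coe_iff.mp hkF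
          have hlogk : y * k < Real.log (b (t * k) k) := by
            rw [lt_div_iff₀ hk0] at hkFr; linarith [hkFr]
          have hloglog : Real.log (b (t * k) k) ≤ Real.log (b (r * k') k') :=
            log_nat_mono (bkey k hk1)
          have e1 : x * (k':ℝ) ≤ x * ((k:ℝ) * q + 1) :=
            mul_le_mul_of_nonneg_left hk'le.le hx0.le
          have hxk' : x * (k':ℝ) ≤ y * k := by nlinarith [hkX]
          have : x ≤ Real.log (b (r * k') k') / k' := by
            rw [le_div_iff₀ hk'pos]
            linarith
          exact EReal.coe_le_coe_iff.mpr this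
      exact le_limsup_of_frequently_le hfreq'
  by_contra hlt
  push_neg at hlt
  obtain ⟨x, hx1, hx2⟩ := EReal.exists_between_coe_real hlt
  exact absurd (lt_of_le_of_lt (claim x hx2) hx1) (lt_irrefl _)
end

section
/- Let (𝒞,∂) be a finite-dimensional chain complex over a field with an action function 𝒜 (a non-Archimedean filtration) such that ∂ strictly decreases action. Suppose (𝒞₁',∂₁'),…,(𝒞ₚ',∂ₚ') are subcomplexes spanned by subsets of a fixed basis, with pairwise trivial intersections 𝒞ᵢ' ∩ 𝒞ⱼ' = {0} for i ≠ j, each with nonzero homology, and each ε-isolated in (𝒞,∂), meaning: (i) for every nonzero y ∈ 𝒞ᵢ', 𝒜(y) − 𝒜((∂−∂ᵢ')y) > ε, and (ii) for every nonzero y ∈ (𝒞ᵢ')^⊥ and ζ ∈ 𝒞ᵢ' with ζ + ∂y ∈ (𝒞ᵢ')^⊥, one has 𝒜(y) − 𝒜(ζ) > ε. Then the number b_ε(𝒞) of bars of length greater than ε in the barcode of (𝒞,∂,𝒜) satisfies b_ε(𝒞) ≥ p/2. -/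
open Finsupp

variable {ι : Type*} [Fintype ι] [DecidableEq ι]

/-- The action (filtration level) of a vector in the `ZMod 2`-vector space with
basis `ι` and basis actions `a : ι → ℝ`: the maximum of the actions of the
basis elements appearing, with `𝒜(0) = ⊥`. -/
noncomputable def act (a : ι → ℝ) (v : ι →₀ ZMod 2) : EReal :=
  v.support.sup fun i => ((a i : ℝ) : EReal)

section Helpers

variable {a : ι → ℝ}

lemma act_zero (a : ι → ℝ) : act a (0 : ι →₀ ZMod 2) = ⊥ := by simp [act]

lemma le_act {v : ι →₀ ZMod 2} {i : ι} (h : i ∈ v.support) :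
    ((a i : ℝ) : EReal) ≤ act a v := by
  unfold act; exact Finset.le_sup (f := fun i => ((a i : ℝ) : EReal)) h

lemma act_ne_bot {v : ι →₀ ZMod 2} (h : v ≠ 0) : act a v ≠ ⊥ := by
  obtain ⟨i, hi⟩ := Finsupp.support_nonempty_iff.2 h
  intro hb
  have h2 := le_act (a := a) hi
  rw [hb, le_bot_iff] at h2
  exact EReal.coe_ne_bot (a i) h2

lemma act_bot_lt {v : ι →₀ ZMod 2} (h : v ≠ 0) : (⊥ : EReal) < act a v :=
  bot_lt_iff_ne_bot.2 (act_ne_bot h)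

lemma exists_act_eq {v : ι →₀ ZMod 2} (h : v ≠ 0) :
    ∃ i ∈ v.support, act a v = ((a i : ℝ) : EReal) := by
  unfold act
  exact Finset.exists_mem_eq_sup _ (Finsupp.support_nonempty_iff.2 h) _

lemma act_add_le (v w : ι →₀ ZMod 2) :
    act a (v + w) ≤ max (act a v) (act a w) := by
  unfold act
  refine Finset.sup_le fun i hi => ?_
  rcases Finset.mem_union.1 (Finsupp.support_add hi) with h | h
  · exact le_max_of_le_left (Finset.le_sup (f := fun i => ((a i : ℝ) : EReal)) h)
  · exact le_max_of_le_right (Finset.le_sup (f := fun i => ((a i : ℝ) : EReal)) h)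

lemma act_neg (v : ι →₀ ZMod 2) : act a (-v) = act a v := by
  unfold act; rw [Finsupp.support_neg]

lemma act_add_eq_left {v w : ι →₀ ZMod 2} (h : act a w < act a v) :
    act a (v + w) = act a v := by
  have hv : v ≠ 0 := by
    rintro rfl
    rw [act_zero] at h
    exact absurd h (not_lt_bot)
  obtain ⟨i, hi, hvi⟩ := exists_act_eq hv
  have hiw : i ∉ w.support := by
    intro hmem
    exact absurd (le_act hmem) (by rw [← hvi]; exact not_le.2 h)
  refine le_antisymm ((act_add_le v w).trans (by rw [max_eq_left h.le])) ?_
  have hmem : i ∈ (v + w).support := by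
    rw [Finsupp.mem_support_iff] at hi ⊢
    rw [Finsupp.add_apply, Finsupp.notMem_support_iff.1 hiw, add_zero]
    exact hi
  rw [hvi]
  exact le_act hmem

lemma act_sum_le {κ : Type*} (T : Finset κ) (f : κ → ι →₀ ZMod 2) :
    act a (∑ i ∈ T, f i) ≤ T.sup fun i => act a (f i) := by
  induction T using Finset.cons_induction with
  | empty => simp [act_zero]
  | cons i T hi ih =>
    rw [Finset.sum_cons, Finset.sup_cons]
    refine (act_add_le _ _).trans (max_le le_sup_left (ih.trans le_sup_right))

lemma act_sum_eq {κ : Type*} {T : Finset κ} {f : κ → ι →₀ ZMod 2} {i₀ : κ}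
    [DecidableEq κ]
    (hi₀ : i₀ ∈ T) (h0 : f i₀ ≠ 0)
    (hlt : ∀ j ∈ T, j ≠ i₀ → act a (f j) < act a (f i₀)) :
    act a (∑ i ∈ T, f i) = act a (f i₀) := by
  rw [← Finset.add_sum_erase _ _ hi₀]
  apply act_add_eq_left
  refine lt_of_le_of_lt (act_sum_le _ _) ?_
  rw [Finset.sup_lt_iff (act_bot_lt h0)]
  exact fun j hj => hlt j (Finset.mem_of_mem_erase hj) (Finset.ne_of_mem_erase hj)

lemma ereal_lt_cancel {x z : EReal} {e : ℝ} (h : x + (e : EReal) < z + (e : EReal)) :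
    x < z := by
  by_contra h'
  exact absurd (add_le_add_left (not_lt.1 h' : z ≤ x) ((e : EReal))) (not_le.2 h)

lemma fs_add_self (v : ι →₀ ZMod 2) : v + v = 0 := by
  ext j
  rw [Finsupp.add_apply, Finsupp.zero_apply]
  exact (by decide : ∀ x : ZMod 2, x + x = 0) _

lemma act_filter_le (p : ι → Prop) [DecidablePred p] (v : ι →₀ ZMod 2) :
    act a (v.filter p) ≤ act a v := by
  unfold act
  refine Finset.sup_mono ?_
  rw [Finsupp.support_filter]
  exact Finset.filter_subset _ _

lemma zmod2_sum_smul {κ : Type*} [Fintype κ] (c : κ → ZMod 2) (f : κ → ι →₀ ZMod 2) :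
    ∑ j, c j • f j = ∑ j ∈ Finset.univ.filter (fun j => c j ≠ 0), f j := by
  classical
  rw [← Finset.sum_filter_of_ne (p := fun j => c j ≠ 0)
    (fun x _ hx hc => hx (by rw [hc, zero_smul]))]
  refine Finset.sum_congr rfl fun j hj => ?_
  rw [(by decide : ∀ x : ZMod 2, x ≠ 0 → x = 1) _ (Finset.mem_filter.1 hj).2, one_smul]

lemma sum_indicator_smul {κ : Type*} [Fintype κ] [DecidableEq κ] (T : Finset κ)
    (f : κ → ι →₀ ZMod 2) :
    ∑ j, (if j ∈ T then (1 : ZMod 2) else 0) • f j = ∑ j ∈ T, f j := by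
  simp only [ite_smul, one_smul, zero_smul]
  rw [Finset.sum_ite_mem, Finset.univ_inter]

end Helpers


/-- A subspace `W ⊆ im ∂` is `ε`-robust if every nonzero `ζ ∈ W` is: every `y`
with `∂y = ζ` satisfies `𝒜(y) − 𝒜(ζ) > ε`. -/
def IsRobust (a : ι → ℝ) (d : (ι →₀ ZMod 2) →ₗ[ZMod 2] (ι →₀ ZMod 2)) (ε : ℝ)
    (W : Submodule (ZMod 2) (ι →₀ ZMod 2)) : Prop :=
  W ≤ LinearMap.range d ∧
    ∀ ζ ∈ W, ζ ≠ 0 → ∀ y, d y = ζ → act a ζ + (ε : EReal) < act a y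

/-- `b*_ε(𝒞)`: the maximal dimension of an `ε`-robust subspace of `im ∂`,
i.e. the number of finite bars of length `> ε`. -/
noncomputable def bstar (a : ι → ℝ)
    (d : (ι →₀ ZMod 2) →ₗ[ZMod 2] (ι →₀ ZMod 2)) (ε : ℝ) : ℕ :=
  sSup {n : ℕ | ∃ W : Submodule (ZMod 2) (ι →₀ ZMod 2),
    IsRobust a d ε W ∧ Module.finrank (ZMod 2) W = n}

/-- `b_ε(𝒞) = b*_ε(𝒞) + dim H(𝒞)`, where
`dim H(𝒞) = dim ker ∂ − dim im ∂` counts the infinite bars. -/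
noncomputable def bEps (a : ι → ℝ)
    (d : (ι →₀ ZMod 2) →ₗ[ZMod 2] (ι →₀ ZMod 2)) (ε : ℝ) : ℕ :=
  bstar a d ε +
    (Module.finrank (ZMod 2) (LinearMap.ker d) -
      Module.finrank (ZMod 2) (LinearMap.range d))

/-- `(𝒞',∂')`, spanned by the basis vectors indexed by `S`, is `ε`-isolated in
`(𝒞,∂)`: (i) for every nonzero `y ∈ 𝒞'`, `𝒜(y) − 𝒜((∂−∂')y) > ε`; (ii) for
every nonzero `y ∈ (𝒞')^⊥` and `ζ ∈ 𝒞'` with `ζ + ∂y ∈ (𝒞')^⊥`,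
`𝒜(y) − 𝒜(ζ) > ε`. -/
def IsIsolated (a : ι → ℝ) (d d' : (ι →₀ ZMod 2) →ₗ[ZMod 2] (ι →₀ ZMod 2))
    (S : Set ι) (ε : ℝ) : Prop :=
  (∀ y ∈ Finsupp.supported (ZMod 2) (ZMod 2) S, y ≠ 0 →
      act a ((d - d') y) + (ε : EReal) < act a y) ∧
  (∀ y ∈ Finsupp.supported (ZMod 2) (ZMod 2) Sᶜ, y ≠ 0 →
      ∀ ζ ∈ Finsupp.supported (ZMod 2) (ZMod 2) S,
        ζ + d y ∈ Finsupp.supported (ZMod 2) (ZMod 2) Sᶜ →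
        act a ζ + (ε : EReal) < act a y)

lemma exists_quasi (a : ι → ℝ) (d d' : (ι →₀ ZMod 2) →ₗ[ZMod 2] (ι →₀ ZMod 2))
    (ε : ℝ) (S : Set ι)
    (hd' : d' ∘ₗ d' = 0)
    (hsub : ∀ y ∈ Finsupp.supported (ZMod 2) (ZMod 2) S,
      d' y ∈ Finsupp.supported (ZMod 2) (ZMod 2) S)
    (hiso : IsIsolated a d d' S ε)
    (hhom : ∃ ξ ∈ Finsupp.supported (ZMod 2) (ZMod 2) S,
      d' ξ = 0 ∧ ∀ y ∈ Finsupp.supported (ZMod 2) (ZMod 2) S, d' y ≠ ξ) :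
    ∃ ξ : ι →₀ ZMod 2, ξ ≠ 0 ∧ ξ ∈ Finsupp.supported (ZMod 2) (ZMod 2) S ∧
      act a (d ξ) + (ε : EReal) < act a ξ ∧
      ∀ y, act a (d y + ξ) < act a ξ → act a ξ + (ε : EReal) < act a y := by
  classical
  set Ξ : Set (ι →₀ ZMod 2) := {x | x ∈ Finsupp.supported (ZMod 2) (ZMod 2) S ∧
    d' x = 0 ∧ ∀ y ∈ Finsupp.supported (ZMod 2) (ZMod 2) S, d' y ≠ x} with hΞdef
  have hne : Ξ.Nonempty := by
    obtain ⟨x, h1, h2, h3⟩ := hhom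
    exact ⟨x, h1, h2, h3⟩
  obtain ⟨ξ, hξ, hmin⟩ := Set.exists_min_image Ξ (act a) (Set.toFinite Ξ) hne
  obtain ⟨hξS, hξd', hξni⟩ := hξ
  have hξ0 : ξ ≠ 0 := fun h =>
    hξni 0 (Submodule.zero_mem _) (by rw [map_zero, h])
  have hA : act a (d ξ) + (ε : EReal) < act a ξ := by
    have h := hiso.1 ξ hξS hξ0
    rwa [LinearMap.sub_apply, hξd', sub_zero] at h
  refine ⟨ξ, hξ0, hξS, hA, ?_⟩
  intro y hy
  by_contra hcon
  push_neg at hcon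
  -- hcon : act a y ≤ act a ξ + ε
  set τ : ι →₀ ZMod 2 := d y + ξ with hτdef
  set u : ι →₀ ZMod 2 := y.filter (· ∈ S) with hudef
  set w : ι →₀ ZMod 2 := y.filter (fun i => i ∉ S) with hwdef
  have huw : y = u + w := by
    ext j
    rw [Finsupp.add_apply, hudef, hwdef, Finsupp.filter_apply, Finsupp.filter_apply]
    by_cases hj : j ∈ S <;> simp [hj]
  have huS : u ∈ Finsupp.supported (ZMod 2) (ZMod 2) S := by
    rw [Finsupp.mem_supported, hudef, Finsupp.support_filter]
    intro j hj
    exact (Finset.mem_filter.1 hj).2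
  have hwS : w ∈ Finsupp.supported (ZMod 2) (ZMod 2) Sᶜ := by
    rw [Finsupp.mem_supported, hwdef, Finsupp.support_filter]
    intro j hj
    exact (Finset.mem_filter.1 hj).2
  have hu_le : act a u ≤ act a y := act_filter_le _ y
  have hw_le : act a w ≤ act a y := act_filter_le _ y
  have hfilter_self : ∀ x ∈ Finsupp.supported (ZMod 2) (ZMod 2) S,
      Finsupp.filter (· ∈ S) x = x := by
    intro x hx
    ext j
    rw [Finsupp.filter_apply]
    split_ifs with hj
    · rfl
    · exact (Finsupp.notMem_support_iff.1 (fun hmem => hj (hx hmem))).symm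
  -- key identity
  have hdy : d y = ξ + τ := by
    rw [hτdef]
    calc d y = d y + (ξ + ξ) := by rw [fs_add_self, add_zero]
    _ = ξ + (d y + ξ) := by abel
  have hkey : ξ + Finsupp.filter (· ∈ S) τ =
      d' u + (Finsupp.filter (· ∈ S) ((d - d') u) + Finsupp.filter (· ∈ S) (d w)) := by
    have h1 : Finsupp.filter (· ∈ S) (d y) = ξ + Finsupp.filter (· ∈ S) τ := by
      rw [hdy, Finsupp.filter_add, hfilter_self ξ hξS]
    have h2 : d y = d' u + ((d - d') u + d w) := by
      rw [LinearMap.sub_apply]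
      calc d y = d u + d w := by rw [← map_add, ← huw]
      _ = d' u + (d u - d' u + d w) := by abel
    rw [← h1, h2, Finsupp.filter_add, Finsupp.filter_add, hfilter_self (d' u) (hsub u huS)]
  set ρ : ι →₀ ZMod 2 := ξ - d' u with hρdef
  have hρeq : ρ = Finsupp.filter (· ∈ S) ((d - d') u) + Finsupp.filter (· ∈ S) (d w)
      - Finsupp.filter (· ∈ S) τ := by
    rw [hρdef, eq_sub_of_add_eq hkey.symm]
    abel
  -- action bounds
  have h3 : act a (Finsupp.filter (· ∈ S) τ) < act a ξ :=
    lt_of_le_of_lt (act_filter_le _ _) hy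
  have h1 : act a (Finsupp.filter (· ∈ S) ((d - d') u)) < act a ξ := by
    rcases eq_or_ne u 0 with hu0 | hu0
    · rw [hu0, map_zero]
      simpa [act_zero, Finsupp.filter_zero] using act_bot_lt hξ0
    · refine lt_of_le_of_lt (act_filter_le _ _) ?_
      have h := hiso.1 u huS hu0
      exact ereal_lt_cancel (lt_of_lt_of_le h (hu_le.trans hcon))
  have h2 : act a (Finsupp.filter (· ∈ S) (d w)) < act a ξ := by
    rcases eq_or_ne w 0 with hw0 | hw0
    · rw [hw0, map_zero]
      simpa [act_zero, Finsupp.filter_zero] using act_bot_lt hξ0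
    · have hζS : Finsupp.filter (· ∈ S) (d w) ∈ Finsupp.supported (ZMod 2) (ZMod 2) S := by
        rw [Finsupp.mem_supported, Finsupp.support_filter]
        intro j hj
        exact (Finset.mem_filter.1 hj).2
      have hζdw : Finsupp.filter (· ∈ S) (d w) + d w ∈
          Finsupp.supported (ZMod 2) (ZMod 2) Sᶜ := by
        rw [Finsupp.mem_supported]
        intro j hj
        rw [Finset.mem_coe, Finsupp.mem_support_iff, Finsupp.add_apply,
          Finsupp.filter_apply] at hj
        by_contra hjS
        rw [Set.notMem_compl_iff] at hjS
        rw [if_pos hjS] at hj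
        exact hj ((by decide : ∀ x : ZMod 2, x + x = 0) _)
      have h := hiso.2 w hwS hw0 _ hζS hζdw
      exact ereal_lt_cancel (lt_of_lt_of_le h (hw_le.trans hcon))
  have hρact : act a ρ < act a ξ := by
    rw [hρeq, sub_eq_add_neg]
    refine lt_of_le_of_lt (act_add_le _ _) (max_lt ?_ ?_)
    · exact lt_of_le_of_lt (act_add_le _ _) (max_lt h1 h2)
    · rwa [act_neg]
  -- ρ ∈ Ξ, contradiction with minimality
  have hρS : ρ ∈ Finsupp.supported (ZMod 2) (ZMod 2) S :=
    Submodule.sub_mem _ hξS (hsub u huS)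
  have hρd' : d' ρ = 0 := by
    rw [hρdef, map_sub, hξd']
    have : d' (d' u) = 0 := by
      have := congrFun (congrArg DFunLike.coe hd') u
      simpa [LinearMap.comp_apply] using this
    rw [this, sub_zero]
  have hρ0 : ρ ≠ 0 := by
    intro h
    rw [hρdef, sub_eq_zero] at h
    exact hξni u huS h.symm
  have hρni : ∀ y' ∈ Finsupp.supported (ZMod 2) (ZMod 2) S, d' y' ≠ ρ := by
    intro y' hy' heq
    apply hξni (y' + u) (Submodule.add_mem _ hy' huS)
    rw [map_add, heq, hρdef]
    abel
  have : act a ξ ≤ act a ρ := hmin ρ ⟨hρS, hρd', hρni⟩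
  exact absurd hρact (not_lt.2 this)

lemma span_rep {κ : Type*} [Fintype κ] (f : κ → ι →₀ ZMod 2) (Q : κ → Prop)
    (hQ : ∀ i, ¬ Q i → f i = 0) {x : ι →₀ ZMod 2}
    (hx : x ∈ Submodule.span (ZMod 2) (Set.range f)) :
    ∃ U : Finset κ, (∀ i ∈ U, Q i) ∧ x = ∑ i ∈ U, f i := by
  classical
  obtain ⟨c, hc⟩ := (Submodule.mem_span_range_iff_exists_fun (ZMod 2)).1 hx
  refine ⟨Finset.univ.filter (fun i => c i ≠ 0 ∧ Q i),
    fun i hi => (Finset.mem_filter.1 hi).2.2, ?_⟩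
  rw [← hc, zmod2_sum_smul]
  refine (Finset.sum_subset ?_ ?_).symm
  · intro i hi
    rw [Finset.mem_filter] at hi ⊢
    exact ⟨hi.1, hi.2.1⟩
  · intro i hi hni
    rw [Finset.mem_filter] at hi hni
    exact hQ i (fun hQi => hni ⟨hi.1, hi.2, hQi⟩)

lemma card_le_finrank_span {κ : Type*} [Fintype κ] (f : κ → ι →₀ ZMod 2)
    (Q : κ → Prop) [DecidablePred Q]
    (hQ : ∀ i, ¬ Q i → f i = 0)
    (hne : ∀ U : Finset κ, (∀ i ∈ U, Q i) → U.Nonempty → ∑ i ∈ U, f i ≠ 0) :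
    (Finset.univ.filter Q).card ≤
      Module.finrank (ZMod 2) (Submodule.span (ZMod 2) (Set.range f)) := by
  classical
  have hind : LinearIndependent (ZMod 2) (fun i : {i : κ // Q i} => f ↑i) := by
    rw [Fintype.linearIndependent_iff]
    intro cg hcg i
    by_contra hci
    set c' : κ → ZMod 2 := fun j => if h : Q j then cg ⟨j, h⟩ else 0 with hc'
    have e1 : ∑ j, c' j • f j = ∑ j ∈ Finset.univ.filter Q, c' j • f j := by
      refine (Finset.sum_subset (Finset.filter_subset _ _) ?_).symm
      intro x _ hx
      have hQx : ¬ Q x := fun h => hx (Finset.mem_filter.2 ⟨Finset.mem_univ x, h⟩)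
      simp only [hc', dif_neg hQx, zero_smul]
    have e2 : ∑ j ∈ Finset.univ.filter Q, c' j • f j = ∑ j : {i : κ // Q i}, cg j • f ↑j := by
      rw [Finset.sum_subtype (p := Q) (Finset.univ.filter Q) (fun x => by simp) (fun j => c' j • f j)]
      refine Finset.sum_congr rfl fun j _ => ?_
      simp only [hc', dif_pos j.2, Subtype.coe_eta]
    have hc0 : ∑ j, c' j • f j = 0 := by rw [e1, e2, hcg]
    rw [zmod2_sum_smul] at hc0
    refine hne (Finset.univ.filter (fun j => c' j ≠ 0)) ?_ ⟨↑i, ?_⟩ hc0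
    · intro j hj
      have hj2 := (Finset.mem_filter.1 hj).2
      by_contra hQj
      exact hj2 (by simp only [hc', dif_neg hQj])
    · rw [Finset.mem_filter]
      refine ⟨Finset.mem_univ _, ?_⟩
      simp only [hc', dif_pos i.2, Subtype.coe_eta]
      exact hci
  have hle : Submodule.span (ZMod 2) (Set.range (fun i : {i : κ // Q i} => f ↑i)) ≤
      Submodule.span (ZMod 2) (Set.range f) :=
    Submodule.span_mono (by rintro _ ⟨j, rfl⟩; exact ⟨↑j, rfl⟩)
  calc (Finset.univ.filter Q).card = Fintype.card {i : κ // Q i} :=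
        (Fintype.card_subtype _).symm
    _ = Module.finrank (ZMod 2)
        (Submodule.span (ZMod 2) (Set.range (fun i : {i : κ // Q i} => f ↑i))) :=
        (finrank_span_eq_card hind).symm
    _ ≤ _ := Submodule.finrank_mono hle

/-- Proposition 4.2: if `(𝒞₁',∂₁'),…,(𝒞ₚ',∂ₚ')` are `ε`-isolated subcomplexes
of `(𝒞,∂)` with pairwise trivial intersections, each with nonzero homology,
then the number of bars of length `> ε` satisfies `b_ε(𝒞) ≥ p/2`. -/
theorem bars_from_isolated_subcomplexes
    (a : ι → ℝ) (ha : Function.Injective a)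
    (d : (ι →₀ ZMod 2) →ₗ[ZMod 2] (ι →₀ ZMod 2)) (hd : d ∘ₗ d = 0)
    (ε : ℝ) (hε : 0 < ε) (p : ℕ)
    (S : Fin p → Set ι)
    (d' : Fin p → ((ι →₀ ZMod 2) →ₗ[ZMod 2] (ι →₀ ZMod 2)))
    (hd' : ∀ i, d' i ∘ₗ d' i = 0)
    (hsub : ∀ i, ∀ y ∈ Finsupp.supported (ZMod 2) (ZMod 2) (S i),
      d' i y ∈ Finsupp.supported (ZMod 2) (ZMod 2) (S i))
    (hiso : ∀ i, IsIsolated a d (d' i) (S i) ε)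
    (hhom : ∀ i, ∃ ξ ∈ Finsupp.supported (ZMod 2) (ZMod 2) (S i),
      d' i ξ = 0 ∧ ∀ y ∈ Finsupp.supported (ZMod 2) (ZMod 2) (S i), d' i y ≠ ξ)
    (hdisj : ∀ i j, i ≠ j →
      Finsupp.supported (ZMod 2) (ZMod 2) (S i) ⊓
        Finsupp.supported (ZMod 2) (ZMod 2) (S j) = ⊥) :
    (p : ℝ) / 2 ≤ (bEps a d ε : ℝ) := by
  classical
  have hquasi := fun i =>
    exists_quasi a d (d' i) ε (S i) (hd' i) (hsub i) (hiso i) (hhom i)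
  choose ξ hξ0 hξS hξA hξB using hquasi
  -- distinct actions
  have hdist : ∀ i j : Fin p, i ≠ j → act a (ξ i) ≠ act a (ξ j) := by
    intro i j hij heq
    obtain ⟨ci, hci, hci'⟩ := exists_act_eq (hξ0 i)
    obtain ⟨cj, hcj, hcj'⟩ := exists_act_eq (hξ0 j)
    have hac : a ci = a cj := by
      have h := hci'.symm.trans (heq.trans hcj')
      exact_mod_cast h
    have hcc : ci = cj := ha hac
    have hciSi : ci ∈ S i := (Finsupp.mem_supported _ _).1 (hξS i) hci
    have hcjSj : cj ∈ S j := (Finsupp.mem_supported _ _).1 (hξS j) hcj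
    have h1 : (Finsupp.single ci (1 : ZMod 2)) ∈
        Finsupp.supported (ZMod 2) (ZMod 2) (S i) ⊓
          Finsupp.supported (ZMod 2) (ZMod 2) (S j) := by
      refine Submodule.mem_inf.2 ⟨?_, ?_⟩
      · rw [Finsupp.mem_supported]
        intro x hx
        have hx' := Finsupp.support_single_subset (Finset.mem_coe.1 hx)
        rw [Finset.mem_singleton] at hx'
        subst hx'
        exact hciSi
      · rw [Finsupp.mem_supported]
        intro x hx
        have hx' := Finsupp.support_single_subset (Finset.mem_coe.1 hx)
        rw [Finset.mem_singleton] at hx'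
        subst hx'
        rw [hcc]
        exact hcjSj
    rw [hdisj i j hij, Submodule.mem_bot] at h1
    exact one_ne_zero (Finsupp.single_eq_zero.1 h1)
  have hstrict : ∀ (T : Finset (Fin p)) (i0 : Fin p), i0 ∈ T →
      (∀ j ∈ T, act a (ξ j) ≤ act a (ξ i0)) →
      ∀ j ∈ T, j ≠ i0 → act a (ξ j) < act a (ξ i0) :=
    fun T i0 _ htp j hj hne => lt_of_le_of_ne (htp j hj) (hdist j i0 hne)
  have htop : ∀ T : Finset (Fin p), T.Nonempty →
      ∃ i0 ∈ T, ∀ j ∈ T, act a (ξ j) ≤ act a (ξ i0) := by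
    intro T hT
    obtain ⟨i0, hi0, hsup⟩ := Finset.exists_mem_eq_sup T hT (fun i => act a (ξ i))
    exact ⟨i0, hi0, fun j hj => by
      rw [← hsup]; exact Finset.le_sup (f := fun i => act a (ξ i)) hj⟩
  have hactT : ∀ (T : Finset (Fin p)) (i0 : Fin p), i0 ∈ T →
      (∀ j ∈ T, act a (ξ j) ≤ act a (ξ i0)) →
      act a (∑ j ∈ T, ξ j) = act a (ξ i0) :=
    fun T i0 hi0 htp => act_sum_eq hi0 (hξ0 i0) (hstrict T i0 hi0 htp)
  have hB' : ∀ (T : Finset (Fin p)) (i0 : Fin p), i0 ∈ T →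
      (∀ j ∈ T, act a (ξ j) ≤ act a (ξ i0)) →
      ∀ y, act a (d y + ∑ j ∈ T, ξ j) < act a (ξ i0) →
      act a (ξ i0) + (ε : EReal) < act a y := by
    intro T i0 hi0 htp y hy
    apply hξB i0 y
    have hsplit : d y + ξ i0 = (d y + ∑ j ∈ T, ξ j) + ∑ j ∈ T.erase i0, ξ j := by
      rw [← Finset.add_sum_erase T ξ hi0]
      calc d y + ξ i0
          = d y + ξ i0 + (∑ j ∈ T.erase i0, ξ j + ∑ j ∈ T.erase i0, ξ j) := by
            rw [fs_add_self, add_zero]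
        _ = d y + (ξ i0 + ∑ j ∈ T.erase i0, ξ j) + ∑ j ∈ T.erase i0, ξ j := by abel
    rw [hsplit]
    refine lt_of_le_of_lt (act_add_le _ _) (max_lt hy ?_)
    refine lt_of_le_of_lt (act_sum_le _ _) ?_
    rw [Finset.sup_lt_iff (act_bot_lt (hξ0 i0))]
    exact fun j hj => hstrict T i0 hi0 htp j (Finset.mem_of_mem_erase hj)
      (Finset.ne_of_mem_erase hj)
  -- the dichotomy predicate
  set P : Fin p → Prop := fun i => ∃ T : Finset (Fin p), i ∈ T ∧
      (∀ j ∈ T, act a (ξ j) ≤ act a (ξ i)) ∧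
      ∃ w : ι →₀ ZMod 2, d w = d (∑ j ∈ T, ξ j) ∧ act a w < act a (ξ i) with hPdef
  have hsel : ∀ i, ∃ T : Finset (Fin p), ∃ w : ι →₀ ZMod 2,
      (¬ P i → T = ∅ ∧ w = 0) ∧
      (P i → i ∈ T ∧ (∀ j ∈ T, act a (ξ j) ≤ act a (ξ i)) ∧
        d w = d (∑ j ∈ T, ξ j) ∧ act a w < act a (ξ i)) := by
    intro i
    by_cases h : P i
    · have h' := h
      simp only [hPdef] at h'
      obtain ⟨T, h1, h2, w, h3, h4⟩ := h'
      exact ⟨T, w, fun h'' => absurd h h'', fun _ => ⟨h1, h2, h3, h4⟩⟩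
    · exact ⟨∅, 0, fun _ => ⟨rfl, rfl⟩, fun h' => absurd h' h⟩
  choose Tf wf hTf0 hTfP using hsel
  set z : Fin p → (ι →₀ ZMod 2) := fun i => (∑ j ∈ Tf i, ξ j) + wf i with hzdef
  have hz_eq : ∀ i, z i = (∑ j ∈ Tf i, ξ j) + wf i := fun _ => rfl
  have hz0 : ∀ i, ¬ P i → z i = 0 := by
    intro i h
    rw [hz_eq, (hTf0 i h).1, (hTf0 i h).2, Finset.sum_empty, add_zero]
  have hzd : ∀ i, P i → d (z i) = 0 := by
    intro i h
    rw [hz_eq, map_add, (hTfP i h).2.2.1, fs_add_self]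
  have hzact : ∀ i, P i → act a (z i) = act a (ξ i) := by
    intro i h
    obtain ⟨h1, h2, h3, h4⟩ := hTfP i h
    have hact : act a (∑ j ∈ Tf i, ξ j) = act a (ξ i) := hactT _ i h1 h2
    rw [hz_eq, act_add_eq_left (by rw [hact]; exact h4), hact]
  have hzne : ∀ i, P i → z i ≠ 0 := fun i h he =>
    act_ne_bot (hξ0 i) (by rw [← hzact i h, he, act_zero])
  -- combo lemma, Z side
  have hUz : ∀ U : Finset (Fin p), (∀ i ∈ U, P i) → U.Nonempty →
      (∑ i ∈ U, z i) ≠ 0 ∧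
      (∀ v, d v = ∑ i ∈ U, z i →
        act a (∑ i ∈ U, z i) + (ε : EReal) < act a v) := by
    intro U hUP hUne
    obtain ⟨i0, hi0, htp⟩ := htop U hUne
    have hzU : act a (∑ i ∈ U, z i) = act a (ξ i0) := by
      rw [act_sum_eq (f := z) hi0 (hzne i0 (hUP i0 hi0))
        (fun j hj hne => by
          rw [hzact j (hUP j hj), hzact i0 (hUP i0 hi0)]
          exact hstrict U i0 hi0 htp j hj hne)]
      exact hzact i0 (hUP i0 hi0)
    have hne0 : (∑ i ∈ U, z i) ≠ 0 := fun he =>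
      act_ne_bot (hξ0 i0) (by rw [← hzU, he, act_zero])
    refine ⟨hne0, ?_⟩
    set c : Fin p → ZMod 2 :=
      fun j => ∑ i ∈ U, (if j ∈ Tf i then (1 : ZMod 2) else 0) with hcdef
    set Tc : Finset (Fin p) := Finset.univ.filter (fun j => c j ≠ 0) with hTcdef
    have hsum : ∑ i ∈ U, z i = (∑ j ∈ Tc, ξ j) + ∑ i ∈ U, wf i := by
      rw [Finset.sum_congr rfl (fun i (_ : i ∈ U) => hz_eq i), Finset.sum_add_distrib]
      congr 1
      calc ∑ i ∈ U, ∑ j ∈ Tf i, ξ j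
          = ∑ i ∈ U, ∑ j, (if j ∈ Tf i then (1 : ZMod 2) else 0) • ξ j := by
            refine Finset.sum_congr rfl fun i _ => (sum_indicator_smul _ _).symm
        _ = ∑ j, (∑ i ∈ U, (if j ∈ Tf i then (1 : ZMod 2) else 0)) • ξ j := by
            rw [Finset.sum_comm]
            exact Finset.sum_congr rfl fun j _ => Finset.sum_smul.symm
        _ = ∑ j ∈ Tc, ξ j := zmod2_sum_smul c ξ
    have hwU : act a (∑ i ∈ U, wf i) < act a (ξ i0) := by
      refine lt_of_le_of_lt (act_sum_le _ _) ?_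
      rw [Finset.sup_lt_iff (act_bot_lt (hξ0 i0))]
      intro j hj
      exact lt_of_lt_of_le (hTfP j (hUP j hj)).2.2.2 (htp j hj)
    have hTcne : Tc.Nonempty := by
      by_contra h
      rw [Finset.not_nonempty_iff_eq_empty] at h
      rw [h, Finset.sum_empty, zero_add] at hsum
      rw [hsum] at hzU
      exact absurd hzU (ne_of_lt hwU)
    obtain ⟨j0, hj0, hjtp⟩ := htop Tc hTcne
    have hTceq : ∑ j ∈ Tc, ξ j = (∑ i ∈ U, z i) + ∑ i ∈ U, wf i := by
      rw [hsum]
      calc ∑ j ∈ Tc, ξ j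
          = ∑ j ∈ Tc, ξ j + (∑ i ∈ U, wf i + ∑ i ∈ U, wf i) := by
            rw [fs_add_self, add_zero]
        _ = (∑ j ∈ Tc, ξ j + ∑ i ∈ U, wf i) + ∑ i ∈ U, wf i := by abel
    have hj0eq : act a (ξ j0) = act a (ξ i0) := by
      have h1 : act a (∑ j ∈ Tc, ξ j) = act a (ξ j0) := hactT Tc j0 hj0 hjtp
      have h2 : act a (∑ j ∈ Tc, ξ j) = act a (ξ i0) := by
        rw [hTceq, act_add_eq_left (by rw [hzU]; exact hwU), hzU]
      rw [← h1, h2]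
    intro v hv
    have hτ : d v + ∑ j ∈ Tc, ξ j = ∑ i ∈ U, wf i := by
      rw [hv, hsum]
      calc (∑ j ∈ Tc, ξ j + ∑ i ∈ U, wf i) + ∑ j ∈ Tc, ξ j
          = ∑ i ∈ U, wf i + (∑ j ∈ Tc, ξ j + ∑ j ∈ Tc, ξ j) := by abel
        _ = ∑ i ∈ U, wf i := by rw [fs_add_self, add_zero]
    have hres := hB' Tc j0 hj0 hjtp v (by rw [hτ, hj0eq]; exact hwU)
    rw [hj0eq] at hres
    rw [hzU]
    exact hres
  -- combo lemma, η side
  have hUη : ∀ U : Finset (Fin p), (∀ i ∈ U, ¬ P i) → U.Nonempty →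
      d (∑ i ∈ U, ξ i) ≠ 0 ∧
      (∀ v, d v = d (∑ i ∈ U, ξ i) →
        act a (d (∑ i ∈ U, ξ i)) + (ε : EReal) < act a v) := by
    intro U hUP hUne
    obtain ⟨i0, hi0, htp⟩ := htop U hUne
    have hkey : ∀ v, d v = d (∑ i ∈ U, ξ i) → act a (ξ i0) ≤ act a v := by
      intro v hv
      by_contra hlt
      refine hUP i0 hi0 ?_
      simp only [hPdef]
      exact ⟨U, hi0, htp, v, hv, not_le.1 hlt⟩
    constructor
    · intro h0
      have h := hkey 0 (by rw [map_zero, h0])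
      rw [act_zero] at h
      exact (act_bot_lt (hξ0 i0)).not_ge h
    · intro v hv
      have h1 : act a (d (∑ i ∈ U, ξ i)) + (ε : EReal) < act a (ξ i0) := by
        obtain ⟨i1, hi1, hsup⟩ :=
          Finset.exists_mem_eq_sup U hUne (fun i => act a (d (ξ i)))
        have hle : act a (d (∑ i ∈ U, ξ i)) ≤ act a (d (ξ i1)) := by
          rw [map_sum]
          exact (act_sum_le U _).trans (le_of_eq hsup)
        calc act a (d (∑ i ∈ U, ξ i)) + (ε : EReal)
            ≤ act a (d (ξ i1)) + (ε : EReal) := add_le_add_left hle _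
          _ < act a (ξ i1) := hξA i1
          _ ≤ act a (ξ i0) := htp i1 hi1
      exact lt_of_lt_of_le h1 (hkey v hv)
  -- bstar facts
  have hbdd : BddAbove {n : ℕ | ∃ W : Submodule (ZMod 2) (ι →₀ ZMod 2),
      IsRobust a d ε W ∧ Module.finrank (ZMod 2) W = n} := by
    refine ⟨Module.finrank (ZMod 2) (ι →₀ ZMod 2), ?_⟩
    rintro n ⟨W, _, rfl⟩
    exact Submodule.finrank_le W
  have hbstar : ∀ W : Submodule (ZMod 2) (ι →₀ ZMod 2), IsRobust a d ε W →
      Module.finrank (ZMod 2) W ≤ bstar a d ε :=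
    fun W hW => le_csSup hbdd ⟨W, hW, rfl⟩
  -- Z-side subspace
  set Zsub := Submodule.span (ZMod 2) (Set.range z) with hZsubdef
  have hZker : Zsub ≤ LinearMap.ker d := by
    rw [hZsubdef, Submodule.span_le]
    rintro _ ⟨i, rfl⟩
    rw [SetLike.mem_coe, LinearMap.mem_ker]
    by_cases h : P i
    · exact hzd i h
    · rw [hz0 i h, map_zero]
  set R1 := Zsub ⊓ LinearMap.range d with hR1def
  have hR1rob : IsRobust a d ε R1 := by
    refine ⟨inf_le_right, ?_⟩
    intro ζ hζ hζ0 v hv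
    obtain ⟨U, hUP, rfl⟩ := span_rep z P hz0 (Submodule.mem_inf.1 hζ).1
    have hUne : U.Nonempty := by
      rw [Finset.nonempty_iff_ne_empty]
      rintro rfl
      rw [Finset.sum_empty] at hζ0
      exact hζ0 rfl
    exact (hUz U hUP hUne).2 v hv
  -- η-side subspace
  set η : Fin p → (ι →₀ ZMod 2) := fun i => if P i then 0 else d (ξ i) with hηdef
  have hη0 : ∀ i, ¬ ¬ P i → η i = 0 := by
    intro i h
    simp only [hηdef, if_pos (not_not.1 h)]
  have hηsum : ∀ U : Finset (Fin p), (∀ i ∈ U, ¬ P i) →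
      ∑ i ∈ U, η i = d (∑ i ∈ U, ξ i) := by
    intro U hU
    rw [map_sum]
    exact Finset.sum_congr rfl fun i hi => by simp only [hηdef, if_neg (hU i hi)]
  set R2 := Submodule.span (ZMod 2) (Set.range η) with hR2def
  have hR2rob : IsRobust a d ε R2 := by
    constructor
    · rw [hR2def, Submodule.span_le]
      rintro _ ⟨i, rfl⟩
      rw [SetLike.mem_coe]
      by_cases h : P i
      · simp only [hηdef, if_pos h]
        exact Submodule.zero_mem _
      · simp only [hηdef, if_neg h]
        exact ⟨ξ i, rfl⟩
    · intro ζ hζ hζ0 v hv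
      obtain ⟨U, hUP, rfl⟩ := span_rep η (fun i => ¬ P i) hη0 hζ
      have hUne : U.Nonempty := by
        rw [Finset.nonempty_iff_ne_empty]
        rintro rfl
        rw [Finset.sum_empty] at hζ0
        exact hζ0 rfl
      rw [hηsum U hUP] at hv ⊢
      exact (hUη U hUP hUne).2 v hv
  -- dimension counts
  have hcardA : (Finset.univ.filter P).card ≤ Module.finrank (ZMod 2) Zsub :=
    card_le_finrank_span z P hz0 (fun U hU hUne => (hUz U hU hUne).1)
  have hcardB : (Finset.univ.filter (fun i => ¬ P i)).card ≤
      Module.finrank (ZMod 2) R2 :=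
    card_le_finrank_span η (fun i => ¬ P i) hη0
      (fun U hU hUne => by rw [hηsum U hU]; exact (hUη U hU hUne).1)
  have hrange_ker : LinearMap.range d ≤ LinearMap.ker d :=
    LinearMap.range_le_ker_iff.2 hd
  have hsupker : Zsub ⊔ LinearMap.range d ≤ LinearMap.ker d :=
    sup_le hZker hrange_ker
  have hdim : Module.finrank (ZMod 2) ↥(Zsub ⊔ LinearMap.range d) +
      Module.finrank (ZMod 2) ↥R1 =
      Module.finrank (ZMod 2) ↥Zsub +
        Module.finrank (ZMod 2) ↥(LinearMap.range d) := by
    rw [hR1def]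
    exact Submodule.finrank_sup_add_finrank_inf_eq _ _
  have hA_le : (Finset.univ.filter P).card +
      Module.finrank (ZMod 2) ↥(LinearMap.range d) ≤
      Module.finrank (ZMod 2) ↥(LinearMap.ker d) +
        Module.finrank (ZMod 2) ↥R1 := by
    calc (Finset.univ.filter P).card +
        Module.finrank (ZMod 2) ↥(LinearMap.range d)
        ≤ Module.finrank (ZMod 2) ↥Zsub +
          Module.finrank (ZMod 2) ↥(LinearMap.range d) :=
          Nat.add_le_add_right hcardA _
      _ = Module.finrank (ZMod 2) ↥(Zsub ⊔ LinearMap.range d) +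
          Module.finrank (ZMod 2) ↥R1 := hdim.symm
      _ ≤ _ := Nat.add_le_add_right (Submodule.finrank_mono hsupker) _
  have h1 : Module.finrank (ZMod 2) ↥R1 ≤ bstar a d ε := hbstar R1 hR1rob
  have h2 : Module.finrank (ZMod 2) ↥R2 ≤ bstar a d ε := hbstar R2 hR2rob
  have hrk : Module.finrank (ZMod 2) ↥(LinearMap.range d) ≤
      Module.finrank (ZMod 2) ↥(LinearMap.ker d) :=
    Submodule.finrank_mono hrange_ker
  have hcards : (Finset.univ.filter P).card +
      (Finset.univ.filter (fun i => ¬ P i)).card = p := by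
    rw [Finset.card_filter_add_card_filter_not, Finset.card_univ,
      Fintype.card_fin]
  have hfin : p ≤ 2 * bEps a d ε := by
    unfold bEps
    omega
  have hfinR : (p : ℝ) ≤ 2 * (bEps a d ε : ℝ) := by exact_mod_cast hfin
  linarith
end
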